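/- Let Y and Z_i (i ∈ I, with I nonempty) be closed upper sets of Λ*. Then elementwise concatenation distributes over arbitrary intersections of closed upper sets: Y(⋂_{i∈I} Z_i) = ⋂_{i∈I} YZ_i and (⋂_{i∈I} Z_i)Y = ⋂_{i∈I} Z_iY. -/
import Mathlib


/-- The Higman ordering on words over an ordered alphabet `Λ`:
`x ≤ y` iff `y` has a subword that is letterwise above `x`. -/
def HigmanLE {Λ : Type*} [PartialOrder Λ] (x y : List Λ) : Prop :=
  List.SublistForall₂ (· ≤ ·) x y

/-- The strict Higman ordering. -/
def HigmanLT {Λ : Type*} [PartialOrder Λ] (x y : List Λ) : Prop :=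
  HigmanLE x y ∧ ¬ HigmanLE y x

/-- The upper cone `X^Δ` of a set of words. -/
def upperCone {Λ : Type*} [PartialOrder Λ] (X : Set (List Λ)) : Set (List Λ) :=
  {y | ∀ x ∈ X, HigmanLE x y}

/-- The lower cone `X^∇` of a set of words. -/
def lowerCone {Λ : Type*} [PartialOrder Λ] (X : Set (List Λ)) : Set (List Λ) :=
  {y | ∀ x ∈ X, HigmanLE y x}

/-- Elementwise concatenation `XY` of two sets of words. -/
def concatSet {Λ : Type*} (X Y : Set (List Λ)) : Set (List Λ) :=
  {w | ∃ x ∈ X, ∃ y ∈ Y, w = x ++ y}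

/-- A (MacNeille) closed upper set of words: `Z = Z^{∇Δ}`. -/
def ClosedUpper {Λ : Type*} [PartialOrder Λ] (Z : Set (List Λ)) : Prop :=
  Z = upperCone (lowerCone Z)

/-- A (MacNeille) closed lower set of words: `W = W^{Δ∇}`. -/
def ClosedLower {Λ : Type*} [PartialOrder Λ] (W : Set (List Λ)) : Prop :=
  W = lowerCone (upperCone W)

/-- An upper set of words with respect to the Higman ordering. -/
def IsUpperWordSet {Λ : Type*} [PartialOrder Λ] (Z : Set (List Λ)) : Prop :=
  ∀ x y : List Λ, HigmanLE x y → x ∈ Z → y ∈ Z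

/-- A finitely generated lower set of words. -/
def FinGenLowerWords {Λ : Type*} [PartialOrder Λ] (S : Set (List Λ)) : Prop :=
  ∃ F : Finset (List Λ), S = {x | ∃ w ∈ F, HigmanLE x w}

/-- A finitely generated lower set of letters. -/
def FinGenLowerLetters {Λ : Type*} [PartialOrder Λ] (S : Set Λ) : Prop :=
  ∃ F : Finset Λ, S = {x | ∃ w ∈ F, x ≤ w}

/-- Well-foundedness: no infinite strictly decreasing sequence. -/
def NoInfiniteDescent {Λ : Type*} [PartialOrder Λ] : Prop :=
  ¬ ∃ f : ℕ → Λ, ∀ n, f (n + 1) < f n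

/-- Stability under the cancellation rule. -/
def StableCancel {Λ : Type*} [PartialOrder Λ] (Z : Set (List Λ)) : Prop :=
  ∀ (y z : List Λ) (α β : Λ), (¬ ∃ c, c ≤ α ∧ c ≤ β) →
    y ++ α :: z ∈ Z → y ++ β :: z ∈ Z → y ++ z ∈ Z

/-- Stability under the reduction rule. -/
def StableReduce {Λ : Type*} [PartialOrder Λ] (Z : Set (List Λ)) : Prop :=
  ∀ (y z : List Λ) (α γ : Λ), α < γ →
    y ++ α :: α :: z ∈ Z → y ++ γ :: z ∈ Z → y ++ α :: z ∈ Z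

/-- Stability under the permutation rule. -/
def StablePerm {Λ : Type*} [PartialOrder Λ] (Z : Set (List Λ)) : Prop :=
  ∀ (y z : List Λ) (α β γ : Λ), ¬ α ≤ β → ¬ β ≤ α → α < γ → β < γ →
    y ++ α :: β :: z ∈ Z → y ++ γ :: z ∈ Z → y ++ β :: α :: z ∈ Z

/-- Stability under the meet rule. -/
def StableMeet {Λ : Type*} [PartialOrder Λ] (Z : Set (List Λ)) : Prop :=
  ∀ (y z : List Λ) (α β m : Λ), ¬ α ≤ β → ¬ β ≤ α →
    IsGLB ({α, β} : Set Λ) m →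
    y ++ α :: z ∈ Z → y ++ β :: z ∈ Z → y ++ m :: z ∈ Z

/-- Stability under all four rules. -/
def StableAll {Λ : Type*} [PartialOrder Λ] (Z : Set (List Λ)) : Prop :=
  StableCancel Z ∧ StableReduce Z ∧ StablePerm Z ∧ StableMeet Z

/-- `[Y]`: the smallest upper set containing `Y` that is stable under the four rules. -/
def stableClosure {Λ : Type*} [PartialOrder Λ] (Y : Set (List Λ)) : Set (List Λ) :=
  ⋂₀ {Z : Set (List Λ) | Y ⊆ Z ∧ IsUpperWordSet Z ∧ StableAll Z}


lemma higman_trans' {Λ : Type*} [PartialOrder Λ] {x y z : List Λ}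
    (h1 : HigmanLE x y) (h2 : HigmanLE y z) : HigmanLE x z :=
  _root_.trans (r := List.SublistForall₂ (· ≤ · : Λ → Λ → Prop)) h1 h2

lemma sublist_higman' {Λ : Type*} [PartialOrder Λ] {x y : List Λ}
    (h : List.Sublist x y) : HigmanLE x y :=
  h.sublistForall₂

lemma closedUpper_isUpper' {Λ : Type*} [PartialOrder Λ] {Z : Set (List Λ)}
    (h : ClosedUpper Z) : IsUpperWordSet Z := by
  intro x y hxy hx
  rw [h] at hx ⊢
  intro a ha
  exact higman_trans' (hx a ha) hxy

/-- concatenation with a closed upper set distributes over arbitrary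
intersections of closed upper sets (nonempty index set). -/
theorem concat_distrib_iInter {Λ : Type*} [PartialOrder Λ] {I : Type*} [Nonempty I]
    (Y : Set (List Λ)) (Z : I → Set (List Λ))
    (hY : ClosedUpper Y) (hZ : ∀ i, ClosedUpper (Z i)) :
    concatSet Y (⋂ i, Z i) = ⋂ i, concatSet Y (Z i) ∧
    concatSet (⋂ i, Z i) Y = ⋂ i, concatSet (Z i) Y := by
  have hYup : IsUpperWordSet Y := closedUpper_isUpper' hY
  have hZup : ∀ i, IsUpperWordSet (Z i) := fun i => closedUpper_isUpper' (hZ i)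
  constructor
  · apply Set.Subset.antisymm
    · rintro w ⟨x, hx, y, hy, rfl⟩
      rw [Set.mem_iInter]
      exact fun i => ⟨x, hx, y, Set.mem_iInter.1 hy i, rfl⟩
    · intro w hw
      rw [Set.mem_iInter] at hw
      have h' : ∀ i, ∃ n, n ≤ w.length ∧ w.take n ∈ Y ∧ w.drop n ∈ Z i := by
        intro i
        obtain ⟨x, hx, y, hy, rfl⟩ := hw i
        refine ⟨x.length, by simp, ?_, ?_⟩
        · rw [List.take_left]; exact hx
        · rw [List.drop_left]; exact hy
      choose k hk1 hk2 hk3 using h'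
      set m := sInf (Set.range k) with hm
      obtain ⟨i₀, hi₀⟩ := Nat.sInf_mem (Set.range_nonempty k)
      refine ⟨w.take m, ?_, w.drop m, ?_, (List.take_append_drop m w).symm⟩
      · rw [hm, ← hi₀]; exact hk2 i₀
      · rw [Set.mem_iInter]
        intro i
        have hle : m ≤ k i := Nat.sInf_le ⟨i, rfl⟩
        have hsub : List.Sublist (w.drop (k i)) (w.drop m) := by
          have h2 := List.drop_sublist (k i - m) (w.drop m)
          rwa [List.drop_drop, Nat.add_sub_cancel' hle] at h2
        exact hZup i _ _ (sublist_higman' hsub) (hk3 i)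
  · apply Set.Subset.antisymm
    · rintro w ⟨x, hx, y, hy, rfl⟩
      rw [Set.mem_iInter]
      exact fun i => ⟨x, Set.mem_iInter.1 hx i, y, hy, rfl⟩
    · intro w hw
      rw [Set.mem_iInter] at hw
      have h' : ∀ i, ∃ n, n ≤ w.length ∧ w.take n ∈ Z i ∧ w.drop n ∈ Y := by
        intro i
        obtain ⟨x, hx, y, hy, rfl⟩ := hw i
        refine ⟨x.length, by simp, ?_, ?_⟩
        · rw [List.take_left]; exact hx
        · rw [List.drop_left]; exact hy
      choose k hk1 hk2 hk3 using h'
      have hbdd : BddAbove (Set.range k) := ⟨w.length, by rintro n ⟨i, rfl⟩; exact hk1 i⟩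
      set m := sSup (Set.range k) with hm
      obtain ⟨i₀, hi₀⟩ := Nat.sSup_mem (Set.range_nonempty k) hbdd
      refine ⟨w.take m, ?_, w.drop m, ?_, (List.take_append_drop m w).symm⟩
      · rw [Set.mem_iInter]
        intro i
        have hle : k i ≤ m := le_csSup hbdd ⟨i, rfl⟩
        have hsub : List.Sublist (w.take (k i)) (w.take m) := by
          have h2 := List.take_sublist (k i) (w.take m)
          rwa [List.take_take, min_eq_left hle] at h2
        exact hZup i _ _ (sublist_higman' hsub) (hk2 i)
      · rw [hm, ← hi₀]; exact hk3 i₀
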